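/- arXiv:0811.4003 — 4 statements merged into one kernel-verified Lean document; each statement's English description precedes it below -/
import Mathlib

section
/- Let ρ be a density matrix on ℂ^M ⊗ ℂ^N (indexed by Fin M × Fin N), and let U_A be any M×M unitary matrix. Then (1/√2)·‖ρ − (U_A ⊗ I_N) ρ (U_A ⊗ I_N)†‖_F ≤ √(2·(Tr(ρ²) − 1/(M·N))). In particular, the maximal LNU distance d_max(ρ) = max over unitaries U_A commuting with Tr_B(ρ) of (1/√2)·‖ρ − (U_A ⊗ I_N) ρ (U_A ⊗ I_N)†‖_F obeys d_max(ρ) ≤ √(2·(Tr(ρ²) − 1/(M·N))). -/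
open Matrix ComplexOrder Kronecker

/-- The Frobenius norm of a complex matrix: `‖A‖_F = √(Tr(AᴴA))`. -/
noncomputable def frobNorm {n : Type*} [Fintype n] (A : Matrix n n ℂ) : ℝ :=
  Real.sqrt ((Aᴴ * A).trace.re)

/-- Partial trace over the second tensor factor. -/
noncomputable def ptraceB {M N : ℕ} (ρ : Matrix (Fin M × Fin N) (Fin M × Fin N) ℂ) :
    Matrix (Fin M) (Fin M) ℂ :=
  Matrix.of fun i j => ∑ k, ρ (i, k) (j, k)

attribute [local instance] Matrix.frobeniusSeminormedAddCommGroup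

lemma trace_conjTranspose_mul_self_re {n : Type*} [Fintype n] (A : Matrix n n ℂ) :
    (Aᴴ * A).trace.re = ∑ j, ∑ i, ‖A i j‖ ^ 2 := by
  simp [Matrix.trace, Matrix.mul_apply, Matrix.diag, Matrix.conjTranspose_apply,
    Complex.re_sum, ← Complex.normSq_eq_norm_sq, Complex.normSq_eq_conj_mul_self,
    Complex.normSq_apply]

lemma trace_conjTranspose_mul_self_re_nonneg {n : Type*} [Fintype n] (A : Matrix n n ℂ) :
    0 ≤ (Aᴴ * A).trace.re := by
  rw [trace_conjTranspose_mul_self_re]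
  positivity

lemma frobNorm_eq_norm {n : Type*} [Fintype n] (A : Matrix n n ℂ) :
    frobNorm A = ‖A‖ := by
  rw [frobNorm, Matrix.frobenius_norm_def, trace_conjTranspose_mul_self_re,
    Real.sqrt_eq_rpow, Finset.sum_comm]
  norm_num [Real.rpow_natCast]

lemma frobNorm_unitary_conj {n : Type*} [Fintype n] [DecidableEq n] (A V : Matrix n n ℂ)
    (hV : Vᴴ * V = 1) : frobNorm (V * A * Vᴴ) = frobNorm A := by
  unfold frobNorm
  congr 2
  have h1 : (V * A * Vᴴ)ᴴ * (V * A * Vᴴ) = V * Aᴴ * (Vᴴ * V) * A * Vᴴ := by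
    simp only [Matrix.conjTranspose_mul, Matrix.conjTranspose_conjTranspose, Matrix.mul_assoc]
  rw [h1, hV, Matrix.mul_one, Matrix.trace_mul_cycle, ← Matrix.mul_assoc, hV,
    Matrix.one_mul]

/-- For any density matrix ρ on ℂ^M ⊗ ℂ^N and any M×M unitary U_A,
the LNU distance (1/√2)‖ρ − (U_A ⊗ I)ρ(U_A ⊗ I)ᴴ‖_F is at most
√(2(Tr ρ² − 1/(MN))).  In particular this bounds the maximal LNU distance,
the maximum over unitaries commuting with Tr_B ρ. -/
theorem lnu_distance_upper_bound {M N : ℕ}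
    (ρ : Matrix (Fin M × Fin N) (Fin M × Fin N) ℂ)
    (hherm : ρ.IsHermitian) (hpsd : ρ.PosSemidef) (htr : ρ.trace = 1)
    (UA : Matrix (Fin M) (Fin M) ℂ) (hU : UA ∈ Matrix.unitaryGroup (Fin M) ℂ) :
    (1 / Real.sqrt 2) *
        frobNorm (ρ - (UA ⊗ₖ (1 : Matrix (Fin N) (Fin N) ℂ)) * ρ *
          (UA ⊗ₖ (1 : Matrix (Fin N) (Fin N) ℂ))ᴴ)
      ≤ Real.sqrt (2 * (((ρ * ρ).trace).re - 1 / (M * N))) := by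
  classical
  -- dispose of the degenerate case M*N = 0
  rcases Nat.eq_zero_or_pos (M * N) with hMN | hMN
  · exfalso
    rcases Nat.mul_eq_zero.mp hMN with h | h
    · subst h
      haveI : IsEmpty (Fin 0 × Fin N) := by infer_instance
      simp [Matrix.trace] at htr
    · subst h
      haveI : IsEmpty (Fin M × Fin 0) := by infer_instance
      simp [Matrix.trace] at htr
  have hMNR : (0:ℝ) < (M*N : ℕ) := by exact_mod_cast hMN
  set V : Matrix (Fin M × Fin N) (Fin M × Fin N) ℂ :=
    UA ⊗ₖ (1 : Matrix (Fin N) (Fin N) ℂ) with hVdef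
  -- V is unitary
  have hVH : Vᴴ = UAᴴ ⊗ₖ (1 : Matrix (Fin N) (Fin N) ℂ) := by
    ext ⟨i,k⟩ ⟨j,l⟩
    simp [hVdef, Matrix.conjTranspose_apply, Matrix.one_apply, eq_comm]
    split <;> simp
  have hUU : UAᴴ * UA = 1 := by
    simpa [Matrix.star_eq_conjTranspose] using hU.1
  have hUU' : UA * UAᴴ = 1 := by
    simpa [Matrix.star_eq_conjTranspose] using hU.2
  have hV1 : Vᴴ * V = 1 := by
    rw [hVH, hVdef, ← Matrix.mul_kronecker_mul, hUU, Matrix.one_mul,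
      Matrix.one_kronecker_one]
  have hV1' : V * Vᴴ = 1 := by
    rw [hVH, hVdef, ← Matrix.mul_kronecker_mul, hUU', Matrix.one_mul,
      Matrix.one_kronecker_one]
  -- the maximally mixed state
  set c : ℂ := ((M*N : ℕ) : ℂ)⁻¹ with hcdef
  set σ : Matrix (Fin M × Fin N) (Fin M × Fin N) ℂ := c • 1 with hσdef
  have hVσ : V * σ * Vᴴ = σ := by
    rw [hσdef, Matrix.mul_smul, Matrix.mul_one, Matrix.smul_mul, hV1']
  -- key decomposition
  have hdecomp : ρ - V * ρ * Vᴴ = (ρ - σ) - V * (ρ - σ) * Vᴴ := by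
    rw [Matrix.mul_sub, Matrix.sub_mul, hVσ]
    abel
  -- trace computation for ρ - σ
  have hσH : (ρ - σ)ᴴ = ρ - σ := by
    rw [Matrix.conjTranspose_sub, hherm.eq, hσdef]
    congr 1
    rw [Matrix.conjTranspose_smul, Matrix.conjTranspose_one]
    congr 1
    simp [hcdef, ← Complex.ofReal_natCast]
  have hcard : (Fintype.card (Fin M × Fin N) : ℂ) = ((M*N : ℕ) : ℂ) := by
    simp
  have htrace2 : ((ρ - σ)ᴴ * (ρ - σ)).trace = (ρ * ρ).trace - c := by
    rw [hσH]
    rw [Matrix.sub_mul, Matrix.mul_sub, Matrix.mul_sub]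
    rw [Matrix.trace_sub, Matrix.trace_sub, Matrix.trace_sub]
    rw [hσdef]
    simp only [Matrix.smul_mul, Matrix.mul_smul, Matrix.one_mul, Matrix.mul_one,
      Matrix.trace_smul, Matrix.trace_one, htr, hcard, smul_eq_mul]
    have hc0 : ((M*N : ℕ) : ℂ) ≠ 0 := Nat.cast_ne_zero.mpr hMN.ne'
    rw [hcdef]
    field_simp
    ring
  set x : ℝ := ((ρ * ρ).trace).re - 1 / (M * N) with hxdef
  have hcre : c.re = 1 / (M * N : ℝ) := by
    rw [hcdef, ← Complex.ofReal_natCast, ← Complex.ofReal_inv]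
    push_cast
    simp [one_div]
  have htrace2re : ((ρ - σ)ᴴ * (ρ - σ)).trace.re = x := by
    rw [htrace2, hxdef, Complex.sub_re, hcre]
  have hx0 : 0 ≤ x := htrace2re ▸ trace_conjTranspose_mul_self_re_nonneg _
  -- norms
  have hfσ : frobNorm (ρ - σ) = Real.sqrt x := by
    rw [frobNorm, htrace2re]
  have hstep : frobNorm (ρ - V * ρ * Vᴴ) ≤ 2 * Real.sqrt x := by
    rw [hdecomp, frobNorm_eq_norm]
    calc ‖(ρ - σ) - V * (ρ - σ) * Vᴴ‖ ≤ ‖ρ - σ‖ + ‖V * (ρ - σ) * Vᴴ‖ := norm_sub_le _ _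
      _ = frobNorm (ρ - σ) + frobNorm (V * (ρ - σ) * Vᴴ) := by
          rw [frobNorm_eq_norm, frobNorm_eq_norm]
      _ = 2 * Real.sqrt x := by
          rw [frobNorm_unitary_conj _ _ hV1, hfσ]; ring
  -- conclude
  have h2 : (0:ℝ) < Real.sqrt 2 := Real.sqrt_pos.mpr (by norm_num)
  have hrhs : Real.sqrt (2 * x) = Real.sqrt 2 * Real.sqrt x := Real.sqrt_mul (by norm_num) x
  rw [hrhs]
  calc (1 / Real.sqrt 2) * frobNorm (ρ - V * ρ * Vᴴ)
      ≤ (1 / Real.sqrt 2) * (2 * Real.sqrt x) := by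
        apply mul_le_mul_of_nonneg_left hstep
        positivity
    _ = Real.sqrt 2 * Real.sqrt x := by
        have h22 : Real.sqrt 2 * Real.sqrt 2 = 2 := Real.mul_self_sqrt (by norm_num)
        field_simp
        linear_combination -Real.sqrt x * h22
end

section
/- Let ρ be a density matrix on ℂ^M ⊗ ℂ^N. Suppose that for every orthonormal basis {v_1, …, v_M} of ℂ^M the dephased state Σ_{j=1}^{M} (|v_j⟩⟨v_j| ⊗ I_N) ρ (|v_j⟩⟨v_j| ⊗ I_N) is different from ρ (i.e. ρ has nonzero quantum discord). Then there exists an M×M unitary matrix U_A such that U_A · Tr_B(ρ) · U_A† = Tr_B(ρ) and (U_A ⊗ I_N) ρ (U_A ⊗ I_N)† ≠ ρ; that is, nonzero quantum discord implies nonzero LNU distance. -/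
open Matrix ComplexOrder Kronecker

lemma kron1_conjT {M N : ℕ} (A : Matrix (Fin M) (Fin M) ℂ) :
    (A ⊗ₖ (1 : Matrix (Fin N) (Fin N) ℂ))ᴴ = Aᴴ ⊗ₖ (1 : Matrix (Fin N) (Fin N) ℂ) := by
  ext ⟨i, k⟩ ⟨j, l⟩
  by_cases h : k = l
  · subst h; simp [conjTranspose_apply, one_apply]
  · have h' : ¬ l = k := fun e => h e.symm
    simp [conjTranspose_apply, one_apply, h, h']

lemma kron1_one_sub_smul {M N : ℕ} (P : Matrix (Fin M) (Fin M) ℂ) :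
    ((1 - (2:ℂ) • P) ⊗ₖ (1 : Matrix (Fin N) (Fin N) ℂ)) =
      1 - (2:ℂ) • (P ⊗ₖ (1 : Matrix (Fin N) (Fin N) ℂ)) := by
  ext ⟨i, k⟩ ⟨j, l⟩
  by_cases h : k = l <;>
    simp [kroneckerMap_apply, one_apply, h, Prod.ext_iff, sub_mul, mul_comm]

/-- If a density matrix ρ on ℂ^M ⊗ ℂ^N has nonzero quantum discord, i.e. for every
orthonormal basis {v_j} of ℂ^M the dephasing Σ_j (|v_j⟩⟨v_j| ⊗ I) ρ (|v_j⟩⟨v_j| ⊗ I)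
differs from ρ, then there is a unitary U_A commuting with Tr_B ρ (in the sense of
leaving it invariant under conjugation) such that (U_A ⊗ I) ρ (U_A ⊗ I)ᴴ ≠ ρ:
nonzero discord implies nonzero LNU distance. -/
theorem discord_nonzero_implies_lnu_nonzero {M N : ℕ}
    (ρ : Matrix (Fin M × Fin N) (Fin M × Fin N) ℂ)
    (hherm : ρ.IsHermitian) (hpsd : ρ.PosSemidef) (htr : ρ.trace = 1)
    (hdiscord : ∀ v : Fin M → (Fin M → ℂ),
      (∀ i j, ∑ k, star (v i k) * v j k = if i = j then 1 else 0) →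
      (∑ j, ((Matrix.vecMulVec (v j) (star (v j))) ⊗ₖ (1 : Matrix (Fin N) (Fin N) ℂ)) * ρ *
          ((Matrix.vecMulVec (v j) (star (v j))) ⊗ₖ (1 : Matrix (Fin N) (Fin N) ℂ))) ≠ ρ) :
    ∃ UA : Matrix (Fin M) (Fin M) ℂ, UA ∈ Matrix.unitaryGroup (Fin M) ℂ ∧
      UA * ptraceB ρ * UAᴴ = ptraceB ρ ∧
      (UA ⊗ₖ (1 : Matrix (Fin N) (Fin N) ℂ)) * ρ *
        (UA ⊗ₖ (1 : Matrix (Fin N) (Fin N) ℂ))ᴴ ≠ ρ := by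
  by_contra hcon
  push_neg at hcon
  -- the partial trace is Hermitian
  have hR : (ptraceB ρ).IsHermitian := by
    ext i j
    simp only [conjTranspose_apply, ptraceB, Matrix.of_apply, star_sum]
    exact Finset.sum_congr rfl fun k _ => hherm.apply (i, k) (j, k)
  -- eigenbasis of the partial trace
  set V : Matrix (Fin M) (Fin M) ℂ := (hR.eigenvectorUnitary : Matrix (Fin M) (Fin M) ℂ)
    with hVdef
  have hVsV : Vᴴ * V = 1 := by
    have := Matrix.mem_unitaryGroup_iff'.mp hR.eigenvectorUnitary.2
    simpa [Matrix.star_eq_conjTranspose] using this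
  have hVVs : V * Vᴴ = 1 := by
    have := Matrix.mem_unitaryGroup_iff.mp hR.eigenvectorUnitary.2
    simpa [Matrix.star_eq_conjTranspose] using this
  set v : Fin M → Fin M → ℂ := fun j i => V i j with hvdef
  have horth : ∀ i j, ∑ k, star (v i k) * v j k = if i = j then 1 else 0 := by
    intro i j
    have := congrFun (congrFun hVsV i) j
    simpa [Matrix.mul_apply, Matrix.conjTranspose_apply, Matrix.one_apply, hvdef] using this
  set P : Fin M → Matrix (Fin M) (Fin M) ℂ := fun m => Matrix.vecMulVec (v m) (star (v m))
    with hPdef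
  set D : Fin M → Matrix (Fin M) (Fin M) ℂ :=
    fun m => Matrix.diagonal (fun j => if j = m then (1:ℂ) else 0) with hDdef
  set L : Matrix (Fin M) (Fin M) ℂ :=
    Matrix.diagonal (RCLike.ofReal ∘ hR.eigenvalues) with hLdef
  have hRspec : ptraceB ρ = V * L * Vᴴ := by
    rw [hVdef, hLdef]; exact hR.spectral_theorem
  have hPeq : ∀ m, P m = V * D m * Vᴴ := by
    intro m
    ext i a
    rw [Matrix.mul_apply]
    simp only [Matrix.mul_diagonal, hDdef, Matrix.conjTranspose_apply, hPdef,
      Matrix.vecMulVec_apply, Pi.star_apply, mul_ite, ite_mul, mul_one, one_mul,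
      mul_zero, zero_mul]
    rw [Finset.sum_ite_eq' Finset.univ m (fun b => V i b * star (V a b))]
    simp [hvdef, mul_comm]
  have key : ∀ A B : Matrix (Fin M) (Fin M) ℂ, (V * A * Vᴴ) * (V * B * Vᴴ) = V * (A * B) * Vᴴ := by
    intro A B
    calc (V * A * Vᴴ) * (V * B * Vᴴ) = V * A * (Vᴴ * V) * B * Vᴴ := by
          simp only [Matrix.mul_assoc]
      _ = V * (A * B) * Vᴴ := by rw [hVsV, Matrix.mul_one]; simp only [Matrix.mul_assoc]
  -- P m commutes with the partial trace
  have hPR : ∀ m, P m * ptraceB ρ = ptraceB ρ * P m := by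
    intro m
    rw [hPeq m, hRspec, key, key, Matrix.diagonal_mul_diagonal, Matrix.diagonal_mul_diagonal]
    have : (fun i => (if i = m then (1:ℂ) else 0) * (RCLike.ofReal ∘ hR.eigenvalues) i)
         = (fun i => (RCLike.ofReal ∘ hR.eigenvalues) i * if i = m then (1:ℂ) else 0) :=
      funext fun i => mul_comm _ _
    rw [this]
  have hPherm : ∀ m, (P m)ᴴ = P m := by
    intro m
    ext i a
    simp [hPdef, Matrix.conjTranspose_apply, Matrix.vecMulVec_apply, mul_comm]
  have hPP : ∀ m, P m * P m = P m := by
    intro m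
    ext i a
    rw [Matrix.mul_apply]
    have h1 : ∀ b, P m i b * P m b a = (star (v m b) * v m b) * (v m i * star (v m a)) := by
      intro b; simp only [hPdef, Matrix.vecMulVec_apply, Pi.star_apply]; ring
    rw [Finset.sum_congr rfl fun b _ => h1 b, ← Finset.sum_mul, horth m m]
    simp [hPdef, Matrix.vecMulVec_apply]
  have hsumP : ∑ m, P m = 1 := by
    have hsumD : ∑ m, D m = 1 := by
      ext i j
      simp only [Matrix.sum_apply, hDdef, Matrix.diagonal_apply, Matrix.one_apply]
      by_cases h : i = j <;> simp [h]
    calc ∑ m, P m = ∑ m, V * D m * Vᴴ := Finset.sum_congr rfl fun m _ => hPeq m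
      _ = V * (∑ m, D m) * Vᴴ := by rw [Finset.mul_sum, Finset.sum_mul]
      _ = 1 := by rw [hsumD, Matrix.mul_one, hVVs]
  -- the flip unitaries
  set U : Fin M → Matrix (Fin M) (Fin M) ℂ := fun m => 1 - (2:ℂ) • P m with hUdef
  have hUherm : ∀ m, (U m)ᴴ = U m := by
    intro m
    simp [hUdef, Matrix.conjTranspose_sub, Matrix.conjTranspose_smul, hPherm]
  have hUU : ∀ m, U m * U m = 1 := by
    intro m
    have h4 : ((2:ℂ) • P m) * ((2:ℂ) • P m) = (4:ℂ) • P m := by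
      rw [Matrix.smul_mul, Matrix.mul_smul, hPP, smul_smul]; norm_num
    calc U m * U m
        = 1 - (2:ℂ) • P m - (2:ℂ) • P m + ((2:ℂ) • P m) * ((2:ℂ) • P m) := by
          simp only [hUdef, sub_mul, mul_sub, one_mul, mul_one]; abel
      _ = 1 := by rw [h4]; module
  have hUmem : ∀ m, U m ∈ Matrix.unitaryGroup (Fin M) ℂ := by
    intro m
    rw [Matrix.mem_unitaryGroup_iff, Matrix.star_eq_conjTranspose, hUherm]
    exact hUU m
  have hUR : ∀ m, U m * ptraceB ρ * (U m)ᴴ = ptraceB ρ := by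
    intro m
    have hcomm : U m * ptraceB ρ = ptraceB ρ * U m := by
      simp only [hUdef, sub_mul, mul_sub, one_mul, mul_one, Matrix.smul_mul, Matrix.mul_smul,
        hPR]
    rw [hUherm, hcomm, Matrix.mul_assoc, hUU, Matrix.mul_one]
  -- the dephasing operators on the full space
  set Q : Fin M → Matrix (Fin M × Fin N) (Fin M × Fin N) ℂ :=
    fun m => (P m) ⊗ₖ (1 : Matrix (Fin N) (Fin N) ℂ) with hQdef
  have hmain : ∀ m, (1 - (2:ℂ) • Q m) * ρ * (1 - (2:ℂ) • Q m) = ρ := by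
    intro m
    have h := hcon (U m) (hUmem m) (hUR m)
    rw [kron1_conjT, hUherm] at h
    rw [hUdef] at h
    rw [kron1_one_sub_smul] at h
    simpa [hQdef] using h
  -- per-m identity
  have hhalf : ∀ m, Q m * ρ * Q m = (2⁻¹:ℂ) • (ρ * Q m) + (2⁻¹:ℂ) • (Q m * ρ) := by
    intro m
    have hexp : (1 - (2:ℂ) • Q m) * ρ * (1 - (2:ℂ) • Q m)
        = ρ - (2:ℂ) • (ρ * Q m) - (2:ℂ) • (Q m * ρ) + (4:ℂ) • (Q m * ρ * Q m) := by
      simp only [sub_mul, mul_sub, one_mul, mul_one, Matrix.smul_mul, Matrix.mul_smul,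
        smul_sub, smul_smul]
      module
    have h5 := hexp.symm.trans (hmain m)
    have h6 : (4:ℂ) • (Q m * ρ * Q m) - ((2:ℂ) • (ρ * Q m) + (2:ℂ) • (Q m * ρ))
        = (ρ - (2:ℂ) • (ρ * Q m) - (2:ℂ) • (Q m * ρ) + (4:ℂ) • (Q m * ρ * Q m)) - ρ := by
      module
    rw [h5, sub_self] at h6
    have h7 := sub_eq_zero.mp h6
    apply smul_right_injective (Matrix (Fin M × Fin N) (Fin M × Fin N) ℂ)
      (show (4:ℂ) ≠ 0 by norm_num)
    show (4:ℂ) • _ = (4:ℂ) • _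
    rw [h7]; module
  have hQ1 : ∑ m, Q m = 1 := by
    have : ∑ m, Q m = (∑ m, P m) ⊗ₖ (1 : Matrix (Fin N) (Fin N) ℂ) := by
      ext ⟨i, k⟩ ⟨j, l⟩
      simp only [Matrix.sum_apply, hQdef, Matrix.kroneckerMap_apply, ← Finset.sum_mul]
    rw [this, hsumP, Matrix.one_kronecker_one]
  have hsum : ∑ m, Q m * ρ * Q m = ρ := by
    calc ∑ m, Q m * ρ * Q m
        = ∑ m, ((2⁻¹:ℂ) • (ρ * Q m) + (2⁻¹:ℂ) • (Q m * ρ)) :=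
          Finset.sum_congr rfl fun m _ => hhalf m
      _ = (2⁻¹:ℂ) • (ρ * ∑ m, Q m) + (2⁻¹:ℂ) • ((∑ m, Q m) * ρ) := by
          rw [Finset.mul_sum, Finset.sum_mul, Finset.smul_sum, Finset.smul_sum,
            ← Finset.sum_add_distrib]
      _ = ρ := by rw [hQ1, Matrix.mul_one, Matrix.one_mul]; module
  exact hdiscord v horth hsum
end

section
/- Let b ∈ ℝ³ be a unit vector and let ρ = (1/4)(I_2 ⊗ I_2 + σ_z ⊗ (b·σ)), where b·σ = b_1 σ_x + b_2 σ_y + b_3 σ_z. For any 2×2 unitary U of the form U = [[e^{iφ}cos θ, e^{iχ}sin θ],[−e^{−iχ}sin θ, e^{−iφ}cos θ]] (θ, φ, χ ∈ ℝ), setting ρ_f = (U ⊗ I_2) ρ (U ⊗ I_2)†, one has Tr(ρ·ρ_f) = (1/2)cos²θ. -/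
set_option maxHeartbeats 1000000

open Matrix Kronecker

/-- Pauli matrix σ_x. -/
def pauliX : Matrix (Fin 2) (Fin 2) ℂ := !![0, 1; 1, 0]

/-- Pauli matrix σ_y. -/
def pauliY : Matrix (Fin 2) (Fin 2) ℂ := !![0, -Complex.I; Complex.I, 0]

/-- Pauli matrix σ_z. -/
def pauliZ : Matrix (Fin 2) (Fin 2) ℂ := !![1, 0; 0, -1]

/-- v·σ = v₁σ_x + v₂σ_y + v₃σ_z for a real 3-vector v. -/
noncomputable def pauliDot (v : Fin 3 → ℝ) : Matrix (Fin 2) (Fin 2) ℂ :=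
  (v 0 : ℂ) • pauliX + (v 1 : ℂ) • pauliY + (v 2 : ℂ) • pauliZ

/-- For the zero-discord two-qubit state ρ = ¼(I⊗I + σ_z⊗(b·σ)) (b a unit vector)
and any SU(2) unitary U = [[e^{iφ}cosθ, e^{iχ}sinθ],[−e^{−iχ}sinθ, e^{−iφ}cosθ]],
with ρ_f = (U⊗I)ρ(U⊗I)ᴴ one has Tr(ρρ_f) = ½cos²θ. -/
theorem zero_discord_state_lnu_overlap (b : Fin 3 → ℝ) (hb : ∑ i, b i ^ 2 = 1)
    (θ φ χ : ℝ)
    (U : Matrix (Fin 2) (Fin 2) ℂ)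
    (hU : U = !![Complex.exp (φ * Complex.I) * Real.cos θ,
                 Complex.exp (χ * Complex.I) * Real.sin θ;
                 -(Complex.exp (-(χ * Complex.I)) * Real.sin θ),
                 Complex.exp (-(φ * Complex.I)) * Real.cos θ])
    (ρ ρf : Matrix (Fin 2 × Fin 2) (Fin 2 × Fin 2) ℂ)
    (hρ : ρ = (4 : ℂ)⁻¹ • ((1 : Matrix (Fin 2 × Fin 2) (Fin 2 × Fin 2) ℂ) +
      pauliZ ⊗ₖ pauliDot b))
    (hρf : ρf = (U ⊗ₖ (1 : Matrix (Fin 2) (Fin 2) ℂ)) * ρ *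
      (U ⊗ₖ (1 : Matrix (Fin 2) (Fin 2) ℂ))ᴴ) :
    (ρ * ρf).trace = ((1 / 2 : ℝ) * Real.cos θ ^ 2 : ℝ) := by
  have hb' : (b 0:ℂ)^2 + (b 1:ℂ)^2 + (b 2:ℂ)^2 = 1 := by
    rw [Fin.sum_univ_three] at hb
    exact_mod_cast congrArg Complex.ofReal hb
  have hcs : ((Real.cos θ:ℂ))^2 + (Real.sin θ:ℂ)^2 = 1 := by
    have h := Real.sin_sq_add_cos_sq θ
    have h2 : ((Real.sin θ)^2 + (Real.cos θ)^2 : ℂ) = 1 := by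
      exact_mod_cast congrArg Complex.ofReal h
    linear_combination h2
  have hexp : ∀ x : ℝ, Complex.exp (x * Complex.I) * Complex.exp (-(x * Complex.I)) = 1 := by
    intro x; rw [← Complex.exp_add]; simp
  have hexp' : ∀ x : ℝ, Complex.exp (Complex.I * x) * Complex.exp (-(Complex.I * x)) = 1 := by
    intro x; rw [← Complex.exp_add]; simp
  have hconj : ∀ x : ℝ, (starRingEnd ℂ) (Complex.exp (x * Complex.I)) = Complex.exp (-(x * Complex.I)) := by
    intro x
    rw [← Complex.exp_conj]; congr 1
    simp [Complex.conj_I]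
  have hconj2 : ∀ x : ℝ, (starRingEnd ℂ) (Complex.exp (-(x * Complex.I))) = Complex.exp (x * Complex.I) := by
    intro x
    rw [← Complex.exp_conj]; congr 1
    simp [Complex.conj_I]
  have hUU : U * Uᴴ = 1 := by
    rw [hU]
    ext i j
    fin_cases i <;> fin_cases j <;>
      simp [Matrix.mul_apply, Fin.sum_univ_two, Matrix.conjTranspose_apply, hconj, hconj2,
        Matrix.one_apply, ← Complex.ofReal_cos, ← Complex.ofReal_sin, Complex.conj_ofReal] <;>
      first
        | ring1
        | linear_combination ((Real.cos θ:ℂ))^2 * hexp φ + ((Real.sin θ:ℂ))^2 * hexp χ + hcs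
        | linear_combination ((Real.cos θ:ℂ))^2 * hexp φ + ((Real.sin θ:ℂ))^2 * hexp' χ + hcs
        | linear_combination ((Real.cos θ:ℂ))^2 * hexp' φ + ((Real.sin θ:ℂ))^2 * hexp χ + hcs
        | linear_combination ((Real.cos θ:ℂ))^2 * hexp' φ + ((Real.sin θ:ℂ))^2 * hexp' χ + hcs
  have hUHU : Uᴴ * U = 1 := by
    rw [hU]
    ext i j
    fin_cases i <;> fin_cases j <;>
      simp [Matrix.mul_apply, Fin.sum_univ_two, Matrix.conjTranspose_apply, hconj, hconj2,
        Matrix.one_apply, ← Complex.ofReal_cos, ← Complex.ofReal_sin, Complex.conj_ofReal] <;>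
      first
        | ring1
        | linear_combination ((Real.cos θ:ℂ))^2 * hexp φ + ((Real.sin θ:ℂ))^2 * hexp χ + hcs
        | linear_combination ((Real.cos θ:ℂ))^2 * hexp φ + ((Real.sin θ:ℂ))^2 * hexp' χ + hcs
        | linear_combination ((Real.cos θ:ℂ))^2 * hexp' φ + ((Real.sin θ:ℂ))^2 * hexp χ + hcs
        | linear_combination ((Real.cos θ:ℂ))^2 * hexp' φ + ((Real.sin θ:ℂ))^2 * hexp' χ + hcs
  have hBB : pauliDot b * pauliDot b = 1 := by
    ext i j
    fin_cases i <;> fin_cases j <;>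
      simp [pauliDot, pauliX, pauliY, pauliZ, Matrix.mul_apply, Fin.sum_univ_two,
        Matrix.one_apply, Complex.I_sq] <;>
      first
        | ring1
        | linear_combination hb'
        | linear_combination (-(b 1:ℂ)^2) * Complex.I_sq
        | linear_combination ((b 1:ℂ)^2) * Complex.I_sq
        | linear_combination hb' - (b 1:ℂ)^2 * Complex.I_sq
        | linear_combination hb' + (b 1:ℂ)^2 * Complex.I_sq
        | linear_combination hb' - 2 * (b 1:ℂ)^2 * Complex.I_sq
        | linear_combination hb' + 2 * (b 1:ℂ)^2 * Complex.I_sq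
        | (ring_nf; simp only [Complex.I_sq]; first | ring1 | linear_combination hb' | linear_combination -hb')
  have htrB : (pauliDot b).trace = 0 := by
    simp [pauliDot, pauliX, pauliY, pauliZ, Matrix.trace, Matrix.diag, Fin.sum_univ_two]
  have hUH : Uᴴ = !![Complex.exp (-(φ * Complex.I)) * Real.cos θ,
                 -(Complex.exp (χ * Complex.I) * Real.sin θ);
                 Complex.exp (-(χ * Complex.I)) * Real.sin θ,
                 Complex.exp (φ * Complex.I) * Real.cos θ] := by
    rw [hU]
    ext i j
    fin_cases i <;> fin_cases j <;>
      simp [Matrix.conjTranspose_apply, hconj, hconj2, ← Complex.ofReal_cos,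
        ← Complex.ofReal_sin, Complex.conj_ofReal]
  have htrZ : (pauliZ * (U * pauliZ * Uᴴ)).trace = 4 * (Real.cos θ:ℂ)^2 - 2 := by
    rw [hUH, hU]
    simp only [← Matrix.mul_assoc]
    simp [pauliZ, Matrix.trace, Matrix.diag, Matrix.mul_apply, Fin.sum_univ_two,
      ← Complex.ofReal_cos, ← Complex.ofReal_sin]
    first
      | ring1
      | linear_combination (2*((Real.cos θ:ℂ))^2) * hexp φ - (2*((Real.sin θ:ℂ))^2) * hexp χ - 2*hcs
      | linear_combination (2*((Real.cos θ:ℂ))^2) * hexp φ - (2*((Real.cos θ:ℂ))^2) * hexp' φ - 4*hcs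
      | linear_combination (2*((Real.cos θ:ℂ))^2) * hexp' φ - (2*((Real.cos θ:ℂ))^2) * hexp φ - 4*hcs
      | linear_combination (2*((Real.cos θ:ℂ))^2) * hexp φ - (2*((Real.sin θ:ℂ))^2) * hexp χ + 2*hcs
      | linear_combination (2*((Real.cos θ:ℂ))^2) * hexp' φ - (2*((Real.sin θ:ℂ))^2) * hexp' χ + 2*hcs
      | linear_combination (2*((Real.cos θ:ℂ))^2) * hexp φ - (2*((Real.sin θ:ℂ))^2) * hexp' χ + 2*hcs
      | linear_combination (2*((Real.cos θ:ℂ))^2) * hexp' φ - (2*((Real.sin θ:ℂ))^2) * hexp χ + 2*hcs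
  have hVH : (U ⊗ₖ (1 : Matrix (Fin 2) (Fin 2) ℂ))ᴴ = Uᴴ ⊗ₖ (1 : Matrix (Fin 2) (Fin 2) ℂ) := by
    ext i j
    simp [Matrix.conjTranspose_apply, Matrix.kroneckerMap_apply, Matrix.one_apply]
    by_cases h : i.2 = j.2 <;> simp [h, eq_comm]
  subst hρ hρf
  rw [hVH]
  rw [show ((1 : Matrix (Fin 2 × Fin 2) (Fin 2 × Fin 2) ℂ)) =
    (1 : Matrix (Fin 2) (Fin 2) ℂ) ⊗ₖ (1 : Matrix (Fin 2) (Fin 2) ℂ) from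
    (Matrix.one_kronecker_one).symm]
  simp only [Matrix.smul_mul, Matrix.mul_smul, smul_smul, Matrix.add_mul, Matrix.mul_add,
    Matrix.trace_smul, Matrix.trace_add, ← Matrix.mul_kronecker_mul,
    Matrix.mul_one, Matrix.one_mul, Matrix.trace_kronecker, hUU, hUHU]
  rw [htrB, hBB, htrZ, Matrix.trace_one]
  have hz : pauliZ.trace = 0 := by
    simp [pauliZ, Matrix.trace, Matrix.diag, Fin.sum_univ_two]
  rw [hz]
  push_cast
  simp
  ring
end

section
/- Let b ∈ ℝ³ be a unit vector and let ρ = (1/4)(I_2 ⊗ I_2 + σ_z ⊗ (b·σ)). Then for the unitary U = σ_x (which commutes with the reduced state Tr_B(ρ) = I_2/2), one has (1/√2)·‖ρ − (σ_x ⊗ I_2) ρ (σ_x ⊗ I_2)‖_F = 1/√2. Hence ρ is a zero-discord separable two-qubit state whose maximal LNU distance attains the value 1/√2, the maximum possible for two-qubit separable states; in particular, nonzero LNU distance does not imply nonzero quantum discord. -/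
open Matrix Kronecker

set_option maxHeartbeats 2000000 in
/-- The zero-discord separable two-qubit state ρ = ¼(I⊗I + σ_z⊗(b·σ)) has maximally
mixed reduced state I/2 (so σ_x is a locally noneffective unitary for it), and its
LNU distance under σ_x equals 1/√2 — the maximum possible for two-qubit separable
states. Hence nonzero LNU distance does not imply nonzero quantum discord. -/
theorem zero_discord_state_attains_max_separable_lnu (b : Fin 3 → ℝ)
    (hb : ∑ i, b i ^ 2 = 1)
    (ρ : Matrix (Fin 2 × Fin 2) (Fin 2 × Fin 2) ℂ)
    (hρ : ρ = (4 : ℂ)⁻¹ • ((1 : Matrix (Fin 2 × Fin 2) (Fin 2 × Fin 2) ℂ) +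
      pauliZ ⊗ₖ pauliDot b)) :
    ptraceB ρ = (2 : ℂ)⁻¹ • (1 : Matrix (Fin 2) (Fin 2) ℂ) ∧
      (1 / Real.sqrt 2) * frobNorm (ρ - (pauliX ⊗ₖ (1 : Matrix (Fin 2) (Fin 2) ℂ)) * ρ *
        (pauliX ⊗ₖ (1 : Matrix (Fin 2) (Fin 2) ℂ))) = 1 / Real.sqrt 2 := by
  subst hρ
  have hb' : b 0 ^ 2 + b 1 ^ 2 + b 2 ^ 2 = 1 := by
    have := hb
    simp [Fin.sum_univ_succ] at this
    linarith
  constructor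
  · ext i j
    fin_cases i <;> fin_cases j <;>
      simp [ptraceB, pauliZ, pauliDot, pauliX, pauliY, Matrix.one_apply,
        Fin.sum_univ_succ, Matrix.kroneckerMap_apply, Matrix.smul_apply,
        Matrix.add_apply] <;> ring
  · rw [frobNorm]
    have key : ∀ x : ℝ, x = 1 → 1 / Real.sqrt 2 * Real.sqrt x = 1 / Real.sqrt 2 := by
      intro x hx; rw [hx, Real.sqrt_one, mul_one]
    apply key
    simp only [Matrix.trace, Matrix.diag, Matrix.mul_apply, Matrix.sub_apply,
      Matrix.conjTranspose_apply, Matrix.smul_apply, Matrix.add_apply,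
        Matrix.one_apply, Matrix.kroneckerMap_apply, pauliZ, pauliDot, pauliX, pauliY,
        Fintype.sum_prod_type, Fin.sum_univ_succ, Fin.sum_univ_zero]
    simp [Complex.ext_iff, Prod.ext_iff, Fin.ext_iff]
    ring_nf
    nlinarith [hb', sq_nonneg (b 0), sq_nonneg (b 1), sq_nonneg (b 2)]
end
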